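/- arXiv:2511.12608 — 2 statements merged into one kernel-verified Lean document; each statement's English description precedes it below -/
import Mathlib

section
/- Let G be a simple graph, k ≥ 2 an integer, and v, w vertices of G. On the set Ω[G,v,w] of paths from v to w, the smallest equivalence relation containing the relations (A) and (B)_k coincides with the smallest equivalence relation containing the relations (A) and (B)'_k, where (B)'_k relates two paths γ, γ' of equal length such that the number of indices i with γ(i) ≠ γ'(i) is strictly less than k. -/
/-- A path of length `len` in a simple graph `G` from `v` to `w`: a function on `{0,…,len}`
(encoded as a function `ℕ → V` that is constantly `w` from index `len` on) whose consecutive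
values are adjacent or equal. -/
structure GPath {V : Type*} (G : SimpleGraph V) (v w : V) where
  len : ℕ
  toFun : ℕ → V
  source : toFun 0 = v
  target : toFun len = w
  step : ∀ i < len, G.Adj (toFun i) (toFun (i + 1)) ∨ toFun i = toFun (i + 1)
  junk : ∀ i, len ≤ i → toFun i = w

namespace GPath

variable {V : Type*} {G : SimpleGraph V}

/-- The constant path of length 0 at a vertex. -/
def refl (G : SimpleGraph V) (v : V) : GPath G v v where
  len := 0
  toFun := fun _ => v
  source := rfl
  target := rfl
  step := fun i hi => absurd hi (Nat.not_lt_zero i)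
  junk := fun _ _ => rfl

/-- Concatenation of composable paths. -/
def concat {u v w : V} (γ : GPath G u v) (δ : GPath G v w) : GPath G u w where
  len := γ.len + δ.len
  toFun := fun i => if i < γ.len then γ.toFun i else δ.toFun (i - γ.len)
  source := by
    by_cases h : 0 < γ.len
    · simpa [h] using γ.source
    · have h0 : γ.len = 0 := by omega
      have huv : u = v := by
        have h1 := γ.source; have h2 := γ.target
        rw [h0] at h2; rw [h1] at h2; exact h2
      show (if 0 < γ.len then γ.toFun 0 else δ.toFun (0 - γ.len)) = u
      rw [if_neg h, Nat.zero_sub, δ.source]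
      exact huv.symm
  target := by
    have h : ¬ γ.len + δ.len < γ.len := by omega
    have h2 : γ.len + δ.len - γ.len = δ.len := by omega
    simp only [h, if_false, h2, δ.target]
  step := by
    intro i hi
    by_cases h1 : i + 1 < γ.len
    · have h0 : i < γ.len := by omega
      simpa [h0, h1] using γ.step i h0
    · by_cases h0 : i < γ.len
      · -- i + 1 = γ.len
        have he : i + 1 = γ.len := by omega
        have h3 : i + 1 - γ.len = 0 := by omega
        have hval : δ.toFun (i + 1 - γ.len) = γ.toFun (i + 1) := by
          rw [h3, δ.source, he, γ.target]
        simp only [h0, if_true, h1, if_false, hval]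
        exact γ.step i h0
      · have h3 : i + 1 - γ.len = (i - γ.len) + 1 := by omega
        simp only [h0, if_false, h1, if_false, h3]
        exact δ.step (i - γ.len) (by omega)
  junk := by
    intro i hi
    have h : ¬ i < γ.len := by omega
    simp only [h, if_false]
    exact δ.junk _ (by omega)

/-- The reverse of a path: `γ̄(i) = γ(len − i)`. -/
def reverse {v w : V} (γ : GPath G v w) : GPath G w v where
  len := γ.len
  toFun := fun i => γ.toFun (γ.len - i)
  source := by simpa using γ.target
  target := by simpa using γ.source
  step := by
    intro i hi
    show G.Adj (γ.toFun (γ.len - i)) (γ.toFun (γ.len - (i + 1))) ∨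
      γ.toFun (γ.len - i) = γ.toFun (γ.len - (i + 1))
    have h1 : γ.len - i = (γ.len - (i + 1)) + 1 := by omega
    rcases γ.step (γ.len - (i + 1)) (by omega) with h | h
    · exact Or.inl (by rw [h1]; exact h.symm)
    · exact Or.inr (by rw [h1, ← h])
  junk := by
    intro i hi
    show γ.toFun (γ.len - i) = v
    have h : γ.len - i = 0 := by omega
    rw [h, γ.source]

end GPath

/-- Relation (A): `γ'` has length `l(γ) + 1` and agrees with `γ` up to an index `x` and,
shifted by one, from `x` on. -/
def RelA {V : Type*} {G : SimpleGraph V} {v w : V} (γ γ' : GPath G v w) : Prop :=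
  γ'.len = γ.len + 1 ∧ ∃ x ≤ γ.len,
    (∀ i ≤ x, γ.toFun i = γ'.toFun i) ∧ (∀ i, x ≤ i → γ.toFun i = γ'.toFun (i + 1))

/-- Relation (B)_k: `γ` and `γ'` have equal length and agree up to some index `i₀` and from
`i₀ + k` on. -/
def RelB {V : Type*} (k : ℕ) {G : SimpleGraph V} {v w : V} (γ γ' : GPath G v w) : Prop :=
  γ.len = γ'.len ∧ ∃ i₀ ≤ γ.len,
    (∀ i ≤ i₀, γ.toFun i = γ'.toFun i) ∧ (∀ i, i₀ + k ≤ i → γ.toFun i = γ'.toFun i)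

/-- `≃_k`: the smallest equivalence relation on paths from `v` to `w` containing the
relations (A) and (B)_k.  The closed `k`-fundamental group `π₁^k[G,v]` is the quotient of
loops at `v` by `≃_k`. -/
def CEq {V : Type*} (k : ℕ) {G : SimpleGraph V} {v w : V} : GPath G v w → GPath G v w → Prop :=
  Relation.EqvGen (fun γ γ' => RelA γ γ' ∨ RelB k γ γ')

/-- Relation (B)'_k: `γ` and `γ'` have equal length and differ at fewer than `k` indices. -/
def RelB' {V : Type*} (k : ℕ) {G : SimpleGraph V} {v w : V} (γ γ' : GPath G v w) : Prop :=
  γ.len = γ'.len ∧ {i : ℕ | γ.toFun i ≠ γ'.toFun i}.ncard < k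

section AuxProof

variable {V : Type*} {G : SimpleGraph V} {v w : V}

private lemma gpath_ext' {γ γ' : GPath G v w} (h1 : γ.len = γ'.len)
    (h2 : ∀ i, γ.toFun i = γ'.toFun i) : γ = γ' := by
  cases γ with
  | mk l f s t st j =>
    cases γ' with
    | mk l' f' s' t' st' j' =>
      simp only at h1 h2
      subst h1
      have hf : f = f' := funext h2
      subst hf
      rfl

private lemma diff_facts (γ γ' : GPath G v w) (h : γ.len = γ'.len) :
    {i : ℕ | γ.toFun i ≠ γ'.toFun i}.Finite ∧
      ∀ i ∈ {i : ℕ | γ.toFun i ≠ γ'.toFun i}, 0 < i ∧ i < γ.len := by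
  have hfacts : ∀ i ∈ {i : ℕ | γ.toFun i ≠ γ'.toFun i}, 0 < i ∧ i < γ.len := by
    intro i hi
    simp only [Set.mem_setOf_eq] at hi
    constructor
    · rcases Nat.eq_zero_or_pos i with h0 | h0
      · exfalso; apply hi; rw [h0, γ.source, γ'.source]
      · exact h0
    · by_contra hlt
      apply hi
      rw [γ.junk i (by omega), γ'.junk i (by omega)]
  refine ⟨(Set.finite_Iio γ.len).subset ?_, hfacts⟩
  intro i hi
  exact (hfacts i hi).2

private lemma relB_to_relB' {k : ℕ} (hk : 2 ≤ k) {γ γ' : GPath G v w}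
    (h : RelB k γ γ') : RelB' k γ γ' := by
  obtain ⟨hlen, i₀, hi₀, hle, hge⟩ := h
  refine ⟨hlen, ?_⟩
  have hsub : {i : ℕ | γ.toFun i ≠ γ'.toFun i} ⊆ Set.Ioo i₀ (i₀ + k) := by
    intro i hi
    simp only [Set.mem_setOf_eq] at hi
    simp only [Set.mem_Ioo]
    constructor
    · by_contra hc; exact hi (hle i (by omega))
    · by_contra hc; exact hi (hge i (by omega))
  have hIoo : (Set.Ioo i₀ (i₀ + k)).ncard = k - 1 := by
    rw [← Finset.coe_Ioo, Set.ncard_coe_finset, Nat.card_Ioo]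
    omega
  have := Set.ncard_le_ncard hsub (by rw [← Finset.coe_Ioo]; exact (Finset.Ioo i₀ (i₀ + k)).finite_toSet)
  omega

private lemma relB'_to_eqvGen {k : ℕ} (hk : 2 ≤ k) :
    ∀ n (γ γ' : GPath G v w), γ.len = γ'.len →
      {i : ℕ | γ.toFun i ≠ γ'.toFun i}.ncard < k →
      {i : ℕ | γ.toFun i ≠ γ'.toFun i}.ncard ≤ n →
      Relation.EqvGen (fun a b : GPath G v w => RelA a b ∨ RelB k a b) γ γ' := by
  intro n
  induction n with
  | zero =>
    intro γ γ' h _ hcard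
    obtain ⟨hfin, -⟩ := diff_facts γ γ' h
    have hD : {i : ℕ | γ.toFun i ≠ γ'.toFun i} = ∅ :=
      (Set.ncard_eq_zero hfin).mp (by omega)
    have : γ = γ' := by
      refine gpath_ext' h fun i => ?_
      by_contra hne
      have : i ∈ ({i : ℕ | γ.toFun i ≠ γ'.toFun i} : Set ℕ) := hne
      rw [hD] at this
      exact this
    exact this ▸ Relation.EqvGen.refl γ
  | succ n ih =>
    intro γ γ' h hk' hcard
    obtain ⟨hfin, hDlt⟩ := diff_facts γ γ' h
    set D := {i : ℕ | γ.toFun i ≠ γ'.toFun i} with hDdef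
    by_cases hne : D.Nonempty
    · -- b : max of D; a : start of the run of consecutive differing indices ending at b
      set b := sSup D with hbdef
      have hbdd : BddAbove D := hfin.bddAbove
      have hb : b ∈ D := Nat.sSup_mem hne hbdd
      have hble : ∀ i ∈ D, i ≤ b := fun i hi => le_csSup hbdd hi
      set A := {a : ℕ | Set.Icc a b ⊆ D} with hAdef
      have hbA : b ∈ A := by
        intro j hj
        simp only [Set.mem_Icc] at hj
        have : j = b := le_antisymm hj.2 hj.1
        exact this ▸ hb
      set a := sInf A with hadef
      have haA : a ∈ A := Nat.sInf_mem ⟨b, hbA⟩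
      have hab : a ≤ b := Nat.sInf_le hbA
      have haD : a ∈ D := haA ⟨le_refl a, hab⟩
      have ha0 : 0 < a := (hDlt a haD).1
      have hblen : b < γ.len := (hDlt b hb).2
      have ham1 : a - 1 ∉ D := by
        intro hmem
        have hA1 : a - 1 ∈ A := by
          intro j hj
          simp only [Set.mem_Icc] at hj
          rcases Nat.lt_or_ge j a with hja | hja
          · have : j = a - 1 := by omega
            exact this ▸ hmem
          · exact haA ⟨hja, hj.2⟩
        have := Nat.sInf_le hA1
        omega
      have hbp1 : b + 1 ∉ D := fun hmem => by have := hble _ hmem; omega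
      have hIcc : (Set.Icc a b).ncard = b + 1 - a := by
        rw [← Finset.coe_Icc, Set.ncard_coe_finset, Nat.card_Icc]
      have hrun : b + 1 - a ≤ D.ncard := by
        rw [← hIcc]; exact Set.ncard_le_ncard haA hfin
      -- the hybrid path
      obtain ⟨δ, hdlen, hdfun⟩ : ∃ δ : GPath G v w, δ.len = γ.len ∧
          ∀ i, δ.toFun i = if a ≤ i ∧ i ≤ b then γ'.toFun i else γ.toFun i := by
        refine ⟨⟨γ.len, fun i => if a ≤ i ∧ i ≤ b then γ'.toFun i else γ.toFun i,
          ?_, ?_, ?_, ?_⟩, rfl, fun _ => rfl⟩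
        · beta_reduce; rw [if_neg (by omega)]; exact γ.source
        · beta_reduce; rw [if_neg (by omega)]; exact γ.target
        · intro i hi
          beta_reduce
          by_cases h1 : a ≤ i ∧ i ≤ b <;> by_cases h2 : a ≤ i + 1 ∧ i + 1 ≤ b
          · rw [if_pos h1, if_pos h2]
            exact γ'.step i (by omega)
          · have hib : i = b := by omega
            rw [if_pos h1, if_neg h2]
            have heq : γ.toFun (i + 1) = γ'.toFun (i + 1) := by
              have : i + 1 ∉ D := hib ▸ hbp1
              simpa [hDdef, Set.mem_setOf_eq, not_not] using this
            rw [heq]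
            exact γ'.step i (by omega)
          · have hia : i = a - 1 := by omega
            rw [if_neg h1, if_pos h2]
            have heq : γ.toFun i = γ'.toFun i := by
              have : i ∉ D := hia ▸ ham1
              simpa [hDdef, Set.mem_setOf_eq, not_not] using this
            rw [heq]
            exact γ'.step i (by omega)
          · rw [if_neg h1, if_neg h2]
            exact γ.step i hi
        · intro i hi
          beta_reduce
          rw [if_neg (by omega)]
          exact γ.junk i hi
      -- γ is (B)_k-related to δ
      have hrel : RelB k γ δ := by
        refine ⟨hdlen.symm, a - 1, by omega, ?_, ?_⟩
        · intro i hi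
          rw [hdfun i, if_neg (by omega)]
        · intro i hi
          rw [hdfun i, if_neg (by omega)]
      -- the differing set of δ and γ' is strictly smaller
      have hsub : {i : ℕ | δ.toFun i ≠ γ'.toFun i} ⊆ D := by
        intro i hi
        simp only [Set.mem_setOf_eq, hdfun i] at hi
        by_cases hc : a ≤ i ∧ i ≤ b
        · rw [if_pos hc] at hi; exact absurd rfl hi
        · rw [if_neg hc] at hi; exact hi
      have hcond : a ≤ b ∧ b ≤ b := ⟨hab, le_refl b⟩
      have hbval : δ.toFun b = γ'.toFun b := by rw [hdfun b, if_pos hcond]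
      have hbnot : b ∉ {i : ℕ | δ.toFun i ≠ γ'.toFun i} := fun hx => hx hbval
      have hlt : {i : ℕ | δ.toFun i ≠ γ'.toFun i}.ncard < D.ncard :=
        Set.ncard_lt_ncard ⟨hsub, fun hDD => hbnot (hDD hb)⟩ hfin
      have hle : {i : ℕ | δ.toFun i ≠ γ'.toFun i}.ncard ≤ D.ncard :=
        le_of_lt hlt
      exact Relation.EqvGen.trans _ δ _
        (Relation.EqvGen.rel _ _ (Or.inr hrel))
        (ih δ γ' (hdlen.trans h) (by omega) (by omega))
    · -- D empty: the paths are equal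
      rw [Set.not_nonempty_iff_eq_empty] at hne
      have : γ = γ' := by
        refine gpath_ext' h fun i => ?_
        by_contra hneq
        have : i ∈ D := hneq
        rw [hne] at this
        exact this
      exact this ▸ Relation.EqvGen.refl γ

end AuxProof

/-- For `k ≥ 2`, on the set `Ω[G,v,w]` of paths from `v` to `w`, the smallest equivalence
relation containing (A) and (B)_k coincides with the smallest equivalence relation
containing (A) and (B)'_k. -/
theorem eqvGen_relB_eq_relB' {V : Type*} (G : SimpleGraph V) (k : ℕ) (hk : 2 ≤ k)
    (v w : V) (γ γ' : GPath G v w) :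
    Relation.EqvGen (fun a b : GPath G v w => RelA a b ∨ RelB k a b) γ γ' ↔
      Relation.EqvGen (fun a b : GPath G v w => RelA a b ∨ RelB' k a b) γ γ' := by
  constructor <;> intro h
  · exact Relation.EqvGen.mono (fun a b hab => hab.imp id (relB_to_relB' hk)) _ _ h
  · induction h with
    | rel a b hab =>
      rcases hab with hA | hB'
      · exact Relation.EqvGen.rel _ _ (Or.inl hA)
      · exact relB'_to_eqvGen hk _ a b hB'.1 hB'.2 le_rfl
    | refl x => exact Relation.EqvGen.refl x
    | symm x y _ ih => exact Relation.EqvGen.symm x y ih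
    | trans x y z _ _ ih1 ih2 => exact Relation.EqvGen.trans x y z ih1 ih2
end

section
/- Let m, n ≥ 1 be integers and let K_m □ K_n denote the Cartesian (box) product of the complete graphs K_m and K_n. Then the closed neighborhood complex N[K_m □ K_n] is simply connected in the combinatorial sense: every edge-path in N[K_m □ K_n] from the vertex (1,1) to itself is edge-path homotopic to the constant edge-path at (1,1); equivalently, the edge-path group E(N[K_m □ K_n], (1,1)) is trivial. -/
/-- An edge-path of length `len` in a simplicial complex `K` (a family of finite subsets of
a vertex set `V`, with a simplex encoded as a finite `Set V`) from `v` to `w`: a sequence of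
vertices (encoded as a function `ℕ → V` that is constantly `w` from index `len` on) such
that each pair of consecutive vertices spans a simplex of `K`. -/
structure EPath {V : Type*} (K : Set (Set V)) (v w : V) where
  len : ℕ
  toFun : ℕ → V
  source : toFun 0 = v
  target : toFun len = w
  edge : ∀ i < len, ({toFun i, toFun (i + 1)} : Set V) ∈ K
  junk : ∀ i, len ≤ i → toFun i = w

namespace EPath

variable {V : Type*} {K : Set (Set V)}

/-- The constant edge-path of length 0 at a vertex. -/
def refl (K : Set (Set V)) (v : V) : EPath K v v where
  len := 0
  toFun := fun _ => v
  source := rfl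
  target := rfl
  edge := fun i hi => absurd hi (Nat.not_lt_zero i)
  junk := fun _ _ => rfl

/-- Concatenation of composable edge-paths. -/
def concat {u v w : V} (γ : EPath K u v) (δ : EPath K v w) : EPath K u w where
  len := γ.len + δ.len
  toFun := fun i => if i < γ.len then γ.toFun i else δ.toFun (i - γ.len)
  source := by
    by_cases h : 0 < γ.len
    · simpa [h] using γ.source
    · have h0 : γ.len = 0 := by omega
      have huv : u = v := by
        have h1 := γ.source; have h2 := γ.target
        rw [h0] at h2; rw [h1] at h2; exact h2
      show (if 0 < γ.len then γ.toFun 0 else δ.toFun (0 - γ.len)) = u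
      rw [if_neg h, Nat.zero_sub, δ.source]
      exact huv.symm
  target := by
    have h : ¬ γ.len + δ.len < γ.len := by omega
    have h2 : γ.len + δ.len - γ.len = δ.len := by omega
    simp only [h, if_false, h2, δ.target]
  edge := by
    intro i hi
    by_cases h1 : i + 1 < γ.len
    · have h0 : i < γ.len := by omega
      simpa [h0, h1] using γ.edge i h0
    · by_cases h0 : i < γ.len
      · have he : i + 1 = γ.len := by omega
        have h3 : i + 1 - γ.len = 0 := by omega
        have hval : δ.toFun (i + 1 - γ.len) = γ.toFun (i + 1) := by
          rw [h3, δ.source, he, γ.target]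
        simp only [h0, if_true, h1, if_false, hval]
        exact γ.edge i h0
      · have h3 : i + 1 - γ.len = (i - γ.len) + 1 := by omega
        simp only [h0, if_false, h1, if_false, h3]
        exact δ.edge (i - γ.len) (by omega)
  junk := by
    intro i hi
    have h : ¬ i < γ.len := by omega
    simp only [h, if_false]
    exact δ.junk _ (by omega)

end EPath

/-- `γ'` is obtained from the edge-path `γ` by deleting the vertex at position `j`. -/
def EDel {V : Type*} {K : Set (Set V)} {v w : V} (γ γ' : EPath K v w) (j : ℕ) : Prop :=
  γ.len = γ'.len + 1 ∧ (∀ i < j, γ'.toFun i = γ.toFun i) ∧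
    (∀ i, j ≤ i → γ'.toFun i = γ.toFun (i + 1))

/-- One step of edge-path homotopy: delete a vertex `v_j` with `1 ≤ j` such that either
(a) `v_{j-1} = v_j`, or (b) `{v_{j-1}, v_j, v_{j+1}}` is a simplex of `K`. -/
def EHomStep {V : Type*} (K : Set (Set V)) {v w : V} (γ γ' : EPath K v w) : Prop :=
  (∃ j, 1 ≤ j ∧ j ≤ γ.len ∧ γ.toFun (j - 1) = γ.toFun j ∧ EDel γ γ' j) ∨
  (∃ j, 1 ≤ j ∧ j + 1 ≤ γ.len ∧
    ({γ.toFun (j - 1), γ.toFun j, γ.toFun (j + 1)} : Set V) ∈ K ∧ EDel γ γ' j)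

/-- Edge-path homotopy: the smallest equivalence relation containing the elementary
deletions (a) and (b).  The edge-path group `E(K,v)` is the quotient of the set of
edge-paths from `v` to `v` by this relation. -/
def EHom {V : Type*} (K : Set (Set V)) {v w : V} : EPath K v w → EPath K v w → Prop :=
  Relation.EqvGen (EHomStep K)

/-- The closed neighborhood `N_G[v] = {v} ∪ N_G(v)` of a vertex in a simple graph. -/
def closedNbhd {V : Type*} (G : SimpleGraph V) (v : V) : Set V :=
  insert v (G.neighborSet v)

/-- The closed neighborhood complex `N[G]`: the family of finite vertex sets contained in
the closed neighborhood of some vertex. -/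
def closedNbhdComplex {V : Type*} (G : SimpleGraph V) : Set (Set V) :=
  {σ : Set V | σ.Finite ∧ ∃ v : V, σ ⊆ closedNbhd G v}

section Aux

variable {V : Type*} {K : Set (Set V)} {v w : V}

lemma EPath.ext' {γ δ : EPath K v w} (h1 : γ.len = δ.len) (h2 : γ.toFun = δ.toFun) :
    γ = δ := by
  cases γ; cases δ; cases h1; cases h2; rfl

/-- Insert a vertex `x` at position `j` (so that `x` becomes `toFun j`). -/
def EPath.insertAt (γ : EPath K v w) (j : ℕ) (x : V) (hj1 : 1 ≤ j) (hj2 : j ≤ γ.len)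
    (h1 : ({γ.toFun (j - 1), x} : Set V) ∈ K)
    (h2 : ({x, γ.toFun j} : Set V) ∈ K) : EPath K v w where
  len := γ.len + 1
  toFun := fun i => if i < j then γ.toFun i else if i = j then x else γ.toFun (i - 1)
  source := by
    have h0 : (0 : ℕ) < j := hj1
    simp only [if_pos h0]
    exact γ.source
  target := by
    have hne : ¬ (γ.len + 1 < j) := by omega
    have hne2 : ¬ (γ.len + 1 = j) := by omega
    simp only [if_neg hne, if_neg hne2]
    have : γ.len + 1 - 1 = γ.len := by omega
    rw [this, γ.target]
  edge := by
    intro i hi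
    beta_reduce
    rcases lt_trichotomy (i + 1) j with h | h | h
    · have hi' : i < j := by omega
      rw [if_pos hi', if_pos h]
      exact γ.edge i (by omega)
    · have hi' : i < j := by omega
      have hne : ¬ (i + 1 < j) := by omega
      rw [if_pos hi', if_neg hne, if_pos h]
      have hii : i = j - 1 := by omega
      rw [hii]
      exact h1
    · rcases lt_trichotomy i j with h' | h' | h'
      · omega
      · subst h'
        have hne : ¬ (i < i) := lt_irrefl i
        have hne2 : ¬ (i + 1 < i) := by omega
        have hne3 : ¬ (i + 1 = i) := by omega
        rw [if_neg hne, if_pos rfl, if_neg hne2, if_neg hne3, Nat.add_sub_cancel]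
        exact h2
      · have hne : ¬ (i < j) := by omega
        have hne1 : ¬ (i = j) := by omega
        have hne2 : ¬ (i + 1 < j) := by omega
        have hne3 : ¬ (i + 1 = j) := by omega
        rw [if_neg hne, if_neg hne1, if_neg hne2, if_neg hne3, Nat.add_sub_cancel]
        have : i = (i - 1) + 1 := by omega
        rw [this]
        exact γ.edge (i - 1) (by omega)
  junk := by
    intro i hi
    beta_reduce
    have hne : ¬ (i < j) := by omega
    have hne1 : ¬ (i = j) := by omega
    rw [if_neg hne, if_neg hne1]
    exact γ.junk (i - 1) (by omega)

/-- Delete the vertex at position `j`, `1 ≤ j < len`. -/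
def EPath.deleteAt (γ : EPath K v w) (j : ℕ) (hj1 : 1 ≤ j) (hj2 : j < γ.len)
    (hedge : ({γ.toFun (j - 1), γ.toFun (j + 1)} : Set V) ∈ K) : EPath K v w where
  len := γ.len - 1
  toFun := fun i => if i < j then γ.toFun i else γ.toFun (i + 1)
  source := by
    have h0 : (0 : ℕ) < j := hj1
    simp only [if_pos h0]
    exact γ.source
  target := by
    have hne : ¬ (γ.len - 1 < j) := by omega
    simp only [if_neg hne]
    have : γ.len - 1 + 1 = γ.len := by omega
    rw [this, γ.target]
  edge := by
    intro i hi
    beta_reduce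
    rcases lt_trichotomy (i + 1) j with h | h | h
    · have hi' : i < j := by omega
      rw [if_pos hi', if_pos h]
      exact γ.edge i (by omega)
    · have hi' : i < j := by omega
      have hne : ¬ (i + 1 < j) := by omega
      rw [if_pos hi', if_neg hne]
      have hii : i = j - 1 := by omega
      have h2 : i + 1 + 1 = j + 1 := by omega
      rw [h2, hii]
      exact hedge
    · have hne : ¬ (i < j) := by omega
      have hne2 : ¬ (i + 1 < j) := by omega
      rw [if_neg hne, if_neg hne2]
      exact γ.edge (i + 1) (by omega)
  junk := by
    intro i hi
    beta_reduce
    have hne : ¬ (i < j) := by omega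
    rw [if_neg hne]
    exact γ.junk (i + 1) (by omega)

/-- Delete the final (duplicated) vertex. -/
def EPath.deleteEnd (γ : EPath K v w) (h1 : 1 ≤ γ.len)
    (hdup : γ.toFun (γ.len - 1) = w) : EPath K v w where
  len := γ.len - 1
  toFun := fun i => if i < γ.len then γ.toFun i else w
  source := by
    have h0 : (0 : ℕ) < γ.len := h1
    simp only [if_pos h0]
    exact γ.source
  target := by
    beta_reduce
    have h : γ.len - 1 < γ.len := by omega
    rw [if_pos h]
    exact hdup
  edge := by
    intro i hi
    beta_reduce
    have h2 : i < γ.len := by omega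
    have h3 : i + 1 < γ.len := by omega
    rw [if_pos h2, if_pos h3]
    exact γ.edge i (by omega)
  junk := by
    intro i hi
    beta_reduce
    by_cases h : i < γ.len
    · have hii : i = γ.len - 1 := by omega
      rw [if_pos h, hii]
      exact hdup
    · rw [if_neg h]

lemma EPath.step_insert (γ : EPath K v w) (j : ℕ) (x : V) (hj1 : 1 ≤ j) (hj2 : j ≤ γ.len)
    (h1 : ({γ.toFun (j - 1), x} : Set V) ∈ K)
    (h2 : ({x, γ.toFun j} : Set V) ∈ K)
    (htri : ({γ.toFun (j - 1), x, γ.toFun j} : Set V) ∈ K) :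
    EHomStep K (γ.insertAt j x hj1 hj2 h1 h2) γ := by
  set δ := γ.insertAt j x hj1 hj2 h1 h2 with hδ
  right
  refine ⟨j, hj1, ?_, ?_, ?_, ?_, ?_⟩
  · show j + 1 ≤ γ.len + 1
    omega
  · have e0 : δ.toFun (j - 1) = γ.toFun (j - 1) := by
      show (if j - 1 < j then γ.toFun (j - 1) else _) = _
      rw [if_pos (by omega : j - 1 < j)]
    have e1 : δ.toFun j = x := by
      show (if j < j then _ else if j = j then x else _) = x
      rw [if_neg (lt_irrefl j), if_pos rfl]
    have e2 : δ.toFun (j + 1) = γ.toFun j := by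
      show (if j + 1 < j then _ else if j + 1 = j then x else γ.toFun (j + 1 - 1)) = _
      rw [if_neg (by omega : ¬ (j + 1 < j)), if_neg (by omega : ¬ (j + 1 = j)),
        Nat.add_sub_cancel]
    rw [e0, e1, e2]
    exact htri
  · show γ.len + 1 = γ.len + 1
    rfl
  · intro i hi
    show _ = (if i < j then γ.toFun i else _)
    rw [if_pos hi]
  · intro i hi
    show _ = (if i + 1 < j then _ else if i + 1 = j then x else γ.toFun (i + 1 - 1))
    rw [if_neg (by omega : ¬ (i + 1 < j)), if_neg (by omega : ¬ (i + 1 = j)),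
      Nat.add_sub_cancel]

lemma EPath.step_delete (γ : EPath K v w) (j : ℕ) (hj1 : 1 ≤ j) (hj2 : j < γ.len)
    (hedge : ({γ.toFun (j - 1), γ.toFun (j + 1)} : Set V) ∈ K)
    (htri : ({γ.toFun (j - 1), γ.toFun j, γ.toFun (j + 1)} : Set V) ∈ K) :
    EHomStep K γ (γ.deleteAt j hj1 hj2 hedge) := by
  right
  refine ⟨j, hj1, by omega, htri, ?_, ?_, ?_⟩
  · show γ.len = γ.len - 1 + 1
    omega
  · intro i hi
    show (if i < j then _ else _) = _
    rw [if_pos hi]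
  · intro i hi
    show (if i < j then _ else _) = _
    rw [if_neg (by omega : ¬ (i < j))]

lemma EPath.step_deleteEnd (γ : EPath K v w) (h1 : 1 ≤ γ.len)
    (hdup : γ.toFun (γ.len - 1) = w) :
    EHomStep K γ (γ.deleteEnd h1 hdup) := by
  left
  refine ⟨γ.len, h1, le_refl _, by rw [hdup, γ.target], ?_, ?_, ?_⟩
  · show γ.len = γ.len - 1 + 1
    omega
  · intro i hi
    show (if i < γ.len then _ else _) = _
    rw [if_pos hi]
  · intro i hi
    show (if i < γ.len then _ else _) = _
    rw [if_neg (by omega : ¬ (i < γ.len))]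
    exact (γ.junk (i + 1) (by omega)).symm

end Aux

section Complete

variable {m n : ℕ}

/-- Any set whose elements are all in row `p` or column `q` is a simplex of the
closed neighborhood complex of `K_m □ K_n`. -/
lemma rowcol_mem (p : Fin m) (q : Fin n) (σ : Set (Fin m × Fin n))
    (h : ∀ z ∈ σ, z.1 = p ∨ z.2 = q) :
    σ ∈ closedNbhdComplex ((⊤ : SimpleGraph (Fin m)).boxProd (⊤ : SimpleGraph (Fin n))) := by
  refine ⟨Set.toFinite σ, (p, q), ?_⟩
  intro z hz
  by_cases hzv : z = (p, q)
  · rw [hzv]; exact Set.mem_insert _ _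
  · refine Set.mem_insert_of_mem _ ?_
    rw [SimpleGraph.mem_neighborSet, SimpleGraph.boxProd_adj]
    rcases h z hz with h1 | h2
    · right
      refine ⟨?_, h1.symm⟩
      rw [SimpleGraph.top_adj]
      intro hq
      exact hzv (Prod.ext h1 hq.symm)
    · left
      refine ⟨?_, h2.symm⟩
      rw [SimpleGraph.top_adj]
      intro hp
      exact hzv (Prod.ext hp.symm h2)

/-- Any pair of vertices is a simplex: the 1-skeleton is complete. -/
lemma pair_mem (x y : Fin m × Fin n) :
    ({x, y} : Set (Fin m × Fin n)) ∈
      closedNbhdComplex ((⊤ : SimpleGraph (Fin m)).boxProd (⊤ : SimpleGraph (Fin n))) := by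
  refine rowcol_mem x.1 y.2 _ ?_
  rintro z (rfl | rfl)
  · exact Or.inl rfl
  · exact Or.inr rfl

end Complete

/-- For `m, n ≥ 1`, the closed neighborhood complex of the Cartesian (box) product
`K_m □ K_n` of complete graphs is simply connected in the combinatorial sense: every
edge loop at the vertex `(1,1)` (here the first vertex `(0,0)` of `Fin m × Fin n`) is
edge-path homotopic to the constant edge-path, i.e. the edge-path group
`E(N[K_m □ K_n], (1,1))` is trivial. -/
theorem closedNbhdComplex_boxProd_complete_simplyConnected
    (m n : ℕ) (hm : 1 ≤ m) (hn : 1 ≤ n) :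
    (∀ γ : EPath
        (closedNbhdComplex ((⊤ : SimpleGraph (Fin m)).boxProd (⊤ : SimpleGraph (Fin n))))
        ((⟨0, hm⟩ : Fin m), (⟨0, hn⟩ : Fin n)) ((⟨0, hm⟩ : Fin m), (⟨0, hn⟩ : Fin n)),
      EHom _ γ (EPath.refl _ ((⟨0, hm⟩ : Fin m), (⟨0, hn⟩ : Fin n)))) ∧
    (∀ c : Quot (EHom
        (closedNbhdComplex ((⊤ : SimpleGraph (Fin m)).boxProd (⊤ : SimpleGraph (Fin n))))
        (v := ((⟨0, hm⟩ : Fin m), (⟨0, hn⟩ : Fin n)))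
        (w := ((⟨0, hm⟩ : Fin m), (⟨0, hn⟩ : Fin n)))),
      c = Quot.mk _ (EPath.refl _ ((⟨0, hm⟩ : Fin m), (⟨0, hn⟩ : Fin n)))) := by
  set K := closedNbhdComplex ((⊤ : SimpleGraph (Fin m)).boxProd (⊤ : SimpleGraph (Fin n)))
    with hK
  set o : Fin m × Fin n := ((⟨0, hm⟩ : Fin m), (⟨0, hn⟩ : Fin n)) with ho
  have key : ∀ N : ℕ, ∀ γ : EPath K o o, γ.len ≤ N → EHom K γ (EPath.refl K o) := by
    intro N
    induction N with
    | zero =>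
      intro γ hγ
      have hlen : γ.len = 0 := by omega
      have : γ = EPath.refl K o := by
        refine EPath.ext' hlen (funext fun i => ?_)
        exact γ.junk i (by omega)
      rw [this]
      exact Relation.EqvGen.refl _
    | succ N ih =>
      intro γ hγ
      by_cases hlen0 : γ.len ≤ N
      · exact ih γ hlen0
      · have hlen : γ.len = N + 1 := by omega
        by_cases hlen1 : γ.len = 1
        · -- length-one loop: the single step is a duplicate, delete it
          have hdup : γ.toFun (γ.len - 1) = o := by
            rw [hlen1]; exact γ.source
          have hdup2 : γ.toFun (γ.len - 1) = γ.toFun γ.len := by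
            rw [hdup, γ.target]
          set δ := γ.deleteEnd (by omega) hdup with hδ
          have hstep : EHomStep K γ δ := γ.step_deleteEnd (by omega) hdup
          have hδlen : δ.len ≤ N := by
            show γ.len - 1 ≤ N; omega
          exact Relation.EqvGen.trans _ _ _ (Relation.EqvGen.rel _ _ hstep) (ih δ hδlen)
        · -- length ≥ 2
          have hlen2 : 2 ≤ γ.len := by omega
          set v1 := γ.toFun 1 with hv1
          set v2 := γ.toFun 2 with hv2
          set x : Fin m × Fin n := (v1.1, v2.2) with hx
          -- the three triangles we need
          have htri1 : ({v1, x, v2} : Set (Fin m × Fin n)) ∈ K := by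
            refine rowcol_mem v1.1 v2.2 _ ?_
            rintro z (rfl | rfl | rfl)
            · exact Or.inl rfl
            · exact Or.inl rfl
            · exact Or.inr rfl
          have htri2 : ({o, v1, x} : Set (Fin m × Fin n)) ∈ K := by
            refine rowcol_mem v1.1 o.2 _ ?_
            rintro z (rfl | rfl | rfl)
            · exact Or.inr rfl
            · exact Or.inl rfl
            · exact Or.inl rfl
          have htri3 : ({o, x, v2} : Set (Fin m × Fin n)) ∈ K := by
            refine rowcol_mem o.1 v2.2 _ ?_
            rintro z (rfl | rfl | rfl)
            · exact Or.inl rfl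
            · exact Or.inr rfl
            · exact Or.inr rfl
          -- step 1: insert x between positions 1 and 2
          have e1 : γ.toFun (2 - 1) = v1 := rfl
          set γ1 := γ.insertAt 2 x (by omega) (by omega)
            (by rw [e1]; exact pair_mem v1 x) (pair_mem x v2) with hγ1
          have hstep1 : EHomStep K γ1 γ :=
            γ.step_insert 2 x (by omega) (by omega) _ _ (by rw [e1]; exact htri1)
          -- facts about γ1's values
          have g10 : γ1.toFun 0 = o := γ1.source
          have g11 : γ1.toFun 1 = v1 := by
            show (if 1 < 2 then γ.toFun 1 else if 1 = 2 then x else γ.toFun (1 - 1)) = v1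
            norm_num
            rfl
          have g12 : γ1.toFun 2 = x := by
            show (if 2 < 2 then γ.toFun 2 else if 2 = 2 then x else γ.toFun (2 - 1)) = x
            norm_num
          have g13 : γ1.toFun 3 = v2 := by
            show (if 3 < 2 then γ.toFun 3 else if 3 = 2 then x else γ.toFun (3 - 1)) = v2
            norm_num
            rfl
          -- step 2: delete v1 at position 1
          have hedge2 : ({γ1.toFun (1 - 1), γ1.toFun (1 + 1)} : Set (Fin m × Fin n)) ∈ K := by
            show ({γ1.toFun 0, γ1.toFun 2} : Set (Fin m × Fin n)) ∈ K
            rw [g10, g12]; exact pair_mem o x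
          have hγ1len : 1 < γ1.len := by
            show 1 < γ.len + 1; omega
          set γ2 := γ1.deleteAt 1 (le_refl 1) hγ1len hedge2 with hγ2
          have hstep2 : EHomStep K γ1 γ2 := by
            refine γ1.step_delete 1 (le_refl 1) hγ1len hedge2 ?_
            show ({γ1.toFun 0, γ1.toFun 1, γ1.toFun 2} : Set (Fin m × Fin n)) ∈ K
            rw [g10, g11, g12]; exact htri2
          have g20 : γ2.toFun 0 = o := γ2.source
          have g21 : γ2.toFun 1 = x := by
            show (if 1 < 1 then γ1.toFun 1 else γ1.toFun (1 + 1)) = x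
            rw [if_neg (lt_irrefl 1)]
            exact g12
          have g22 : γ2.toFun 2 = v2 := by
            show (if 2 < 1 then γ1.toFun 2 else γ1.toFun (2 + 1)) = v2
            rw [if_neg (by omega : ¬ (2 < 1))]
            exact g13
          -- step 3: delete x at position 1
          have hedge3 : ({γ2.toFun (1 - 1), γ2.toFun (1 + 1)} : Set (Fin m × Fin n)) ∈ K := by
            show ({γ2.toFun 0, γ2.toFun 2} : Set (Fin m × Fin n)) ∈ K
            rw [g20, g22]; exact pair_mem o v2
          have hγ2len : 1 < γ2.len := by
            show 1 < γ.len + 1 - 1; omega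
          set γ3 := γ2.deleteAt 1 (le_refl 1) hγ2len hedge3 with hγ3
          have hstep3 : EHomStep K γ2 γ3 := by
            refine γ2.step_delete 1 (le_refl 1) hγ2len hedge3 ?_
            show ({γ2.toFun 0, γ2.toFun 1, γ2.toFun 2} : Set (Fin m × Fin n)) ∈ K
            rw [g20, g21, g22]; exact htri3
          have hγ3len : γ3.len ≤ N := by
            show γ.len + 1 - 1 - 1 ≤ N; omega
          exact Relation.EqvGen.trans _ _ _
            (Relation.EqvGen.symm _ _ (Relation.EqvGen.rel _ _ hstep1))
            (Relation.EqvGen.trans _ _ _ (Relation.EqvGen.rel _ _ hstep2)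
              (Relation.EqvGen.trans _ _ _ (Relation.EqvGen.rel _ _ hstep3)
                (ih γ3 hγ3len)))
  constructor
  · intro γ
    exact key γ.len γ (le_refl _)
  · intro c
    induction c using Quot.ind with
    | _ γ => exact Quot.sound (key γ.len γ (le_refl _))
end
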